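/- Let m ≥ 3 be odd. There do not exist nonnegative integers Q, R, W, V satisfying: mQ = m(m²-m-1)-(m+1)R, mW = m(m-1)² - (m-1)R, (m+2)V = m(m-2) + mR, R ≤ m²-m, and mQ ≥ 0. -/
import Mathlib


/-- For odd `m ≥ 3` there are no nonnegative integers
`Q, R, W, V` satisfying the parameter identities of family (b) of strongly
regular bicirculants with parameters `(4m², 2m²-m, m²-m, m²-m)`. -/
theorem no_family_b_params (m : ℤ) (hodd : Odd m) (hm : 3 ≤ m) :
    ¬ ∃ Q R W V : ℤ, 0 ≤ Q ∧ 0 ≤ R ∧ 0 ≤ W ∧ 0 ≤ V ∧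
      m * Q = m * (m ^ 2 - m - 1) - (m + 1) * R ∧
      m * W = m * (m - 1) ^ 2 - (m - 1) * R ∧
      (m + 2) * V = m * (m - 2) + m * R ∧
      R ≤ m ^ 2 - m ∧ 0 ≤ m * Q := by
  rintro ⟨Q, R, W, V, hQ, hR, hW, hV, e1, e2, e3, hRle, hmQ⟩
  obtain ⟨k, hk⟩ := hodd
  have hm0 : 0 < m := by linarith
  -- m ∣ R
  have hdvd : m ∣ R := by
    have h1 : m ∣ (m + 1) * R := ⟨(m ^ 2 - m - 1) - Q, by linarith⟩
    have h2 : m ∣ m * R := dvd_mul_right m R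
    have h3 : (m + 1) * R - m * R = R := by ring
    exact h3 ▸ dvd_sub h1 h2
  obtain ⟨α, hα⟩ := hdvd
  subst hα
  have hα0 : 0 ≤ α := by
    by_contra h
    push_neg at h
    nlinarith [mul_neg_of_pos_of_neg hm0 h]
  -- α ≤ m - 2
  have hαle : α ≤ m - 2 := by
    by_contra h
    push_neg at h
    have h' : m - 1 ≤ α := by linarith
    nlinarith
  -- m + 2 ∣ 2 * m * (α + 2)
  have hdvd2 : (m + 2) ∣ 2 * m * (α + 2) := ⟨m * (α + 1) - V, by nlinarith [e3]⟩
  -- coprimality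
  have hc2 : IsCoprime (m + 2) 2 := ⟨1, -(k + 1), by linarith⟩
  have hcm : IsCoprime (m + 2) m := ⟨-k, k + 1, by linarith⟩
  have hc : IsCoprime (m + 2) (2 * m) := hc2.mul_right hcm
  have hdvd3 : (m + 2) ∣ (α + 2) := hc.dvd_of_dvd_mul_left hdvd2
  have := Int.le_of_dvd (by linarith) hdvd3
  linarith
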